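/- As e ranges over all oriented edges of the Bruhat–Tits tree of GL₂(K), the compact open sets U(e) form a basis for the topology of P¹(K). -/

import Mathlib

/-!
STATEMENT 3: As `e` ranges over all oriented edges of the Bruhat–Tits tree of
`GL₂(K)`, the compact open sets `U(e)` form a basis for the topology of `P¹(K)`.

`K` is a non-archimedean local field, formalized as a field equipped with a
surjective (rank one, discrete) valuation `v : K → ℤₘ₀`; its ring of integers
is `O = {x : v x ≤ 1}`.  `P¹(K)` is the space of nonzero vectors of `K²` up to
scaling, with the quotient topology.  The edges of the tree are the
`GL₂(K)`-translates `e_*·γ` of the standard edge, and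
`U(e_*·γ) = {x : x·γ⁻¹ ∈ O}` where `O ⊂ P¹(K)` is the set of points with
integral affine coordinate.
-/

noncomputable section

namespace BT3

/-- The value group of a discrete valuation. -/
abbrev Zm0 := WithZero (Multiplicative ℤ)

variable (K : Type) [Field K] [Valued K Zm0]

/-- Nonzero vectors of `K²`. -/
abbrev PNZ := {v : Fin 2 → K // v ≠ 0}

/-- The projective line `P¹(K)`: nonzero vectors up to scaling. -/
abbrev P1 := Quot (fun v w : PNZ K => ∃ c : K, c ≠ 0 ∧ w.1 = c • v.1)

/-- `P¹(K)` carries the quotient topology. -/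
instance : TopologicalSpace (P1 K) :=
  TopologicalSpace.coinduced (Quot.mk _) inferInstance

/-- A vector `(w₀, w₁)` represents a point of the standard affinoid `O ⊂ P¹(K)`
iff `w₀ ≠ 0` and the affine coordinate `w₁/w₀` is integral, i.e. `v(w₁) ≤ v(w₀)`. -/
def IsIntegralVec (w : Fin 2 → K) : Prop :=
  w 0 ≠ 0 ∧ Valued.v (w 1) ≤ Valued.v (w 0)

/-- The compact open `U(e) ⊆ P¹(K)` attached to the oriented edge `e = e_*·γ`
of the Bruhat–Tits tree: the translate of `O` by `γ`. -/
def Uset (γ : Matrix.GeneralLinearGroup (Fin 2) K) : Set (P1 K) :=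
  {x | ∃ v : PNZ K, Quot.mk _ v = x ∧
    IsIntegralVec K (Matrix.vecMul v.1
      ((γ⁻¹ : Matrix.GeneralLinearGroup (Fin 2) K) : Matrix (Fin 2) (Fin 2) K))}

/-- The sets `U(e)`, as `e` ranges over all oriented edges of the Bruhat–Tits
tree (equivalently over all `GL₂(K)`-translates of the standard edge), form a
basis for the topology of `P¹(K)`. -/
lemma rel_equiv : Equivalence (fun v w : PNZ K => ∃ c : K, c ≠ 0 ∧ w.1 = c • v.1) := by
  constructor
  · exact fun v => ⟨1, one_ne_zero, (one_smul _ _).symm⟩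
  · rintro v w ⟨c, hc, h⟩
    exact ⟨c⁻¹, inv_ne_zero hc, by rw [h, smul_smul, inv_mul_cancel₀ hc, one_smul]⟩
  · rintro u v w ⟨c, hc, h⟩ ⟨d, hd, h'⟩
    exact ⟨d * c, mul_ne_zero hd hc, by rw [h', h, smul_smul]⟩

lemma mk_eq_mk {v w : PNZ K} :
    Quot.mk _ v = (Quot.mk _ w : P1 K) ↔ ∃ c : K, c ≠ 0 ∧ w.1 = c • v.1 := by
  rw [Quot.eq]; exact (rel_equiv K).eqvGen_iff

lemma integral_smul {c : K} (hc : c ≠ 0) (w : Fin 2 → K) :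
    IsIntegralVec K (c • w) ↔ IsIntegralVec K w := by
  have hvc : (Valued.v c : Zm0) ≠ 0 := by
    simpa using hc
  unfold IsIntegralVec
  simp only [Pi.smul_apply, smul_eq_mul, map_mul, mul_ne_zero_iff]
  constructor
  · rintro ⟨h0, h1⟩
    exact ⟨h0.2, le_of_mul_le_mul_left h1 (lt_of_le_of_ne (zero_le') (Ne.symm hvc))⟩
  · rintro ⟨h0, h1⟩
    exact ⟨⟨hc, h0⟩, mul_le_mul_right h1 _⟩

lemma mem_Uset_iff (γ : Matrix.GeneralLinearGroup (Fin 2) K) (v : PNZ K) :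
    (Quot.mk _ v : P1 K) ∈ Uset K γ ↔
      IsIntegralVec K (Matrix.vecMul v.1
        ((γ⁻¹ : Matrix.GeneralLinearGroup (Fin 2) K) : Matrix (Fin 2) (Fin 2) K)) := by
  constructor
  · rintro ⟨w, hw, hint⟩
    obtain ⟨c, hc, hcw⟩ := (mk_eq_mk K).mp hw.symm
    rw [hcw, Matrix.smul_vecMul] at hint
    exact (integral_smul K hc _).mp hint
  · intro h
    exact ⟨v, rfl, h⟩



open Filter Topology in
lemma isOpen_integral : IsOpen {w : Fin 2 → K | IsIntegralVec K w} := by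
  rw [isOpen_iff_mem_nhds]
  rintro w ⟨hw0, hw1⟩
  have hv0 : (Valued.v (w 0) : Zm0) ≠ 0 := by simpa using hw0
  set γu : Zm0ˣ := Units.mk0 _ hv0 with hγu
  have hb0 : {y : K | Valued.v (y - w 0) < γu} ∈ 𝓝 (w 0) :=
    Valued.mem_nhds.mpr ⟨Units.mk0 (Valued.v.restrict (w 0)) (by simpa using hv0), fun y hy => by
      have hy' : Valued.v.restrict (y - w 0) < Valued.v.restrict (w 0) := hy
      show Valued.v (y - w 0) < ((Units.mk0 _ hv0 : Zm0ˣ) : Zm0)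
      rw [Units.val_mk0]; exact Valued.v.restrict_lt_iff.mp hy'⟩
  have hb1 : {y : K | Valued.v (y - w 1) < γu} ∈ 𝓝 (w 1) :=
    Valued.mem_nhds.mpr ⟨Units.mk0 (Valued.v.restrict (w 0)) (by simpa using hv0), fun y hy => by
      have hy' : Valued.v.restrict (y - w 1) < Valued.v.restrict (w 0) := hy
      show Valued.v (y - w 1) < ((Units.mk0 _ hv0 : Zm0ˣ) : Zm0)
      rw [Units.val_mk0]; exact Valued.v.restrict_lt_iff.mp hy'⟩
  filter_upwards [(continuous_apply 0).continuousAt.preimage_mem_nhds hb0,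
    (continuous_apply 1).continuousAt.preimage_mem_nhds hb1] with u h0 h1
  simp only [Set.mem_setOf_eq, Units.val_mk0, hγu] at h0 h1
  have he : Valued.v (u 0) = Valued.v (w 0) := by
    have h : u 0 = (u 0 - w 0) + w 0 := by ring
    rw [h]; exact Valuation.map_add_eq_of_lt_right _ h0
  refine ⟨fun hu => hv0 (by rw [← he, hu, map_zero]), ?_⟩
  have h : u 1 = (u 1 - w 1) + w 1 := by ring
  rw [h, he]
  exact le_trans (Valuation.map_add _ _ _) (max_le h1.le hw1)

lemma continuous_vecMul (B : Matrix (Fin 2) (Fin 2) K) :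
    Continuous fun w : Fin 2 → K => Matrix.vecMul w B := by
  apply continuous_pi; intro j
  simp only [Matrix.vecMul, dotProduct]
  exact continuous_finset_sum _ fun i _ => (continuous_apply i).mul continuous_const

lemma isOpen_Uset (γ : Matrix.GeneralLinearGroup (Fin 2) K) : IsOpen (Uset K γ) := by
  apply isOpen_coinduced.mpr
  have h : Quot.mk _ ⁻¹' (Uset K γ) =
      Subtype.val ⁻¹' ((fun w : Fin 2 → K => Matrix.vecMul w
        ((γ⁻¹ : Matrix.GeneralLinearGroup (Fin 2) K) : Matrix (Fin 2) (Fin 2) K)) ⁻¹'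
        {w | IsIntegralVec K w}) := by
    ext v
    exact mem_Uset_iff K γ v
  rw [h]
  exact (((isOpen_integral K).preimage (continuous_vecMul K _)).preimage continuous_subtype_val)


open Filter Topology in
theorem isTopologicalBasis_Usets
    (hv : Function.Surjective (Valued.v : K → Zm0)) :
    TopologicalSpace.IsTopologicalBasis
      {S : Set (P1 K) | ∃ γ : Matrix.GeneralLinearGroup (Fin 2) K, S = Uset K γ} := by
  apply TopologicalSpace.isTopologicalBasis_of_isOpen_of_nhds
  · rintro S ⟨γ, rfl⟩; exact isOpen_Uset K γ
  · intro a u ha hu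
    obtain ⟨v, rfl⟩ := Quot.exists_rep a
    have hpre : IsOpen (Quot.mk _ ⁻¹' u : Set (PNZ K)) := isOpen_coinduced.mp hu
    obtain ⟨W, hWopen, hWeq⟩ := isOpen_induced_iff.mp hpre
    by_cases h0 : v.1 0 = 0
    · -- point at infinity case : v.1 0 = 0
      have h1 : v.1 1 ≠ 0 := by
        intro h; apply v.2; funext i; fin_cases i <;> simp [h0, h]
      have hne : (![0, 1] : Fin 2 → K) ≠ 0 := by
        intro h; have := congrFun h 1; simp at this
      set vw : PNZ K := ⟨![0, 1], hne⟩ with hvw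
      have hrel : (Quot.mk _ v : P1 K) = Quot.mk _ vw := by
        apply Quot.sound
        refine ⟨(v.1 1)⁻¹, inv_ne_zero h1, ?_⟩
        funext i; fin_cases i <;>
          simp [hvw, h0, inv_mul_cancel₀ h1]
      have hmem : vw.1 ∈ W := by
        have hx : vw ∈ Quot.mk _ ⁻¹' u := by
          rw [Set.mem_preimage, ← hrel]; exact ha
        rw [← hWeq] at hx; exact hx
      have hW : W ∈ 𝓝 vw.1 := hWopen.mem_nhds hmem
      rw [nhds_pi] at hW
      obtain ⟨I, hIf, ts, hts, hsub⟩ := Filter.mem_pi.mp hW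
      obtain ⟨γ0', hγ0'⟩ := Valued.mem_nhds.mp (hts 0)
      obtain ⟨γ1', hγ1'⟩ := Valued.mem_nhds.mp (hts 1)
      set γ0 : Zm0ˣ := (Units.map (MonoidWithZeroHom.ValueGroup₀.embedding (f := MonoidWithZeroHom.ofClass (Valued.v : Valuation K Zm0))).toMonoidHom γ0') with hγ0d
      set γ1 : Zm0ˣ := (Units.map (MonoidWithZeroHom.ValueGroup₀.embedding (f := MonoidWithZeroHom.ofClass (Valued.v : Valuation K Zm0))).toMonoidHom γ1') with hγ1d
      have hγ0 : {y | Valued.v (y - vw.1 0) < (γ0 : Zm0)} ⊆ ts 0 := fun y hy =>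
        hγ0' (Valued.v.restrict_lt_iff_lt_embedding.mpr hy)
      have hγ1 : {y | Valued.v (y - vw.1 1) < (γ1 : Zm0)} ⊆ ts 1 := fun y hy =>
        hγ1' (Valued.v.restrict_lt_iff_lt_embedding.mpr hy)
      set δ : Zm0ˣ := min γ0 γ1 with hδ
      obtain ⟨c, hc⟩ := hv ((δ : Zm0) * ((Multiplicative.ofAdd (-1 : ℤ) : Multiplicative ℤ) : Zm0))
      have hvc_lt : Valued.v c < (δ : Zm0) := by
        rw [hc]
        calc (δ : Zm0) * ((Multiplicative.ofAdd (-1 : ℤ) : Multiplicative ℤ) : Zm0)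
            < (δ : Zm0) * 1 := by
              apply mul_lt_mul_of_pos_left _ (zero_lt_iff.mpr δ.ne_zero)
              exact WithZero.coe_lt_coe.mpr (by exact Multiplicative.ofAdd_lt.mpr (by norm_num))
          _ = (δ : Zm0) := mul_one _
      have hc0 : c ≠ 0 := by
        intro h; rw [h, map_zero] at hc
        exact (mul_ne_zero δ.ne_zero (WithZero.coe_ne_zero)) hc.symm
      set A : Matrix (Fin 2) (Fin 2) K := !![0, 1; c, 0] with hA
      set B : Matrix (Fin 2) (Fin 2) K := !![0, c⁻¹; 1, 0] with hB
      have hAB : A * B = 1 := by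
        ext i j; fin_cases i <;> fin_cases j <;>
          (simp [hA, hB, Matrix.mul_apply, Fin.sum_univ_two]; try field_simp)
      have hBA : B * A = 1 := by
        ext i j; fin_cases i <;> fin_cases j <;>
          (simp [hA, hB, Matrix.mul_apply, Fin.sum_univ_two]; try field_simp)
      set γ : Matrix.GeneralLinearGroup (Fin 2) K := ⟨A, B, hAB, hBA⟩ with hγ
      have hγinv : ((γ⁻¹ : Matrix.GeneralLinearGroup (Fin 2) K) :
          Matrix (Fin 2) (Fin 2) K) = B := rfl
      refine ⟨Uset K γ, ⟨γ, rfl⟩, ?_, ?_⟩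
      · rw [hrel, mem_Uset_iff, hγinv]
        have hcomp : Matrix.vecMul vw.1 B = ![1, 0] := by
          funext j; fin_cases j <;>
            simp [hvw, hB, Matrix.vecMul, dotProduct, Fin.sum_univ_two]
        rw [hcomp]
        exact ⟨by simp, by simp⟩
      · rintro y ⟨w, rfl, hint⟩
        rw [hγinv] at hint
        have hw1 : w.1 1 ≠ 0 := by
          have hx := hint.1
          simpa [hB, Matrix.vecMul, dotProduct, Fin.sum_univ_two] using hx
        set s : K := w.1 0 / w.1 1 with hs
        have hne2 : (![s, 1] : Fin 2 → K) ≠ 0 := by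
          intro h; have := congrFun h 1; simp at this
        set w2 : PNZ K := ⟨![s, 1], hne2⟩ with hw2
        have hsm : w2.1 = (w.1 1)⁻¹ • w.1 := by
          funext i; fin_cases i <;>
            simp [hw2, hs, div_eq_inv_mul, inv_mul_cancel₀ hw1]
        have hrelw : (Quot.mk _ w : P1 K) = Quot.mk _ w2 :=
          Quot.sound ⟨(w.1 1)⁻¹, inv_ne_zero hw1, hsm⟩
        have hint2 : IsIntegralVec K (Matrix.vecMul w2.1 B) := by
          rw [hsm, Matrix.smul_vecMul]
          exact (integral_smul K (inv_ne_zero hw1) _).mpr hint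
        have hcomp : Matrix.vecMul w2.1 B = ![1, s / c] := by
          funext j; fin_cases j <;>
            simp [hw2, hB, Matrix.vecMul, dotProduct, Fin.sum_univ_two, div_eq_mul_inv]
        rw [hcomp] at hint2
        have hst : Valued.v s ≤ Valued.v c := by
          have h2 := hint2.2
          simp only [Matrix.cons_val_one, Matrix.head_cons, Matrix.cons_val_zero, map_one,
            map_div₀] at h2
          have hvcpos : (0 : Zm0) < Valued.v c := by
            rw [zero_lt_iff]; simpa using hc0
          exact (div_le_one₀ hvcpos).mp h2
        have hmemW : w2.1 ∈ W := by
          apply hsub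
          intro i _
          fin_cases i
          · apply hγ0
            show Valued.v (w2.1 0 - vw.1 0) < (γ0 : Zm0)
            have h3 : w2.1 0 - vw.1 0 = s := by simp [hw2, hvw]
            rw [h3]
            refine lt_of_le_of_lt hst (lt_of_lt_of_le hvc_lt ?_)
            exact_mod_cast Units.val_le_val.mpr (min_le_left γ0 γ1)
          · apply hγ1
            show Valued.v (w2.1 1 - vw.1 1) < (γ1 : Zm0)
            have h3 : w2.1 1 - vw.1 1 = 0 := by simp [hw2, hvw]
            rw [h3, map_zero]
            exact zero_lt_iff.mpr γ1.ne_zero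
        rw [hrelw]
        have h4 : w2 ∈ Quot.mk _ ⁻¹' u := by rw [← hWeq]; exact hmemW
        exact h4
    · -- affine case : v.1 0 ≠ 0
      set t : K := v.1 1 / v.1 0 with ht
      have hne : (![1, t] : Fin 2 → K) ≠ 0 := by
        intro h; have := congrFun h 0; simp at this
      set vw : PNZ K := ⟨![1, t], hne⟩ with hvw
      have hrel : (Quot.mk _ v : P1 K) = Quot.mk _ vw := by
        apply Quot.sound
        refine ⟨(v.1 0)⁻¹, inv_ne_zero h0, ?_⟩
        funext i; fin_cases i <;>
          simp [hvw, ht, div_eq_inv_mul, inv_mul_cancel₀ h0]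
      have hmem : vw.1 ∈ W := by
        have h1 : vw ∈ Quot.mk _ ⁻¹' u := by
          rw [Set.mem_preimage, ← hrel]; exact ha
        rw [← hWeq] at h1; exact h1
      have hW : W ∈ 𝓝 vw.1 := hWopen.mem_nhds hmem
      rw [nhds_pi] at hW
      obtain ⟨I, hIf, ts, hts, hsub⟩ := Filter.mem_pi.mp hW
      obtain ⟨γ0', hγ0'⟩ := Valued.mem_nhds.mp (hts 0)
      obtain ⟨γ1', hγ1'⟩ := Valued.mem_nhds.mp (hts 1)
      set γ0 : Zm0ˣ := (Units.map (MonoidWithZeroHom.ValueGroup₀.embedding (f := MonoidWithZeroHom.ofClass (Valued.v : Valuation K Zm0))).toMonoidHom γ0') with hγ0d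
      set γ1 : Zm0ˣ := (Units.map (MonoidWithZeroHom.ValueGroup₀.embedding (f := MonoidWithZeroHom.ofClass (Valued.v : Valuation K Zm0))).toMonoidHom γ1') with hγ1d
      have hγ0 : {y | Valued.v (y - vw.1 0) < (γ0 : Zm0)} ⊆ ts 0 := fun y hy =>
        hγ0' (Valued.v.restrict_lt_iff_lt_embedding.mpr hy)
      have hγ1 : {y | Valued.v (y - vw.1 1) < (γ1 : Zm0)} ⊆ ts 1 := fun y hy =>
        hγ1' (Valued.v.restrict_lt_iff_lt_embedding.mpr hy)
      set δ : Zm0ˣ := min γ0 γ1 with hδ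
      obtain ⟨c, hc⟩ := hv ((δ : Zm0) * ((Multiplicative.ofAdd (-1 : ℤ) : Multiplicative ℤ) : Zm0))
      have hvc_lt : Valued.v c < (δ : Zm0) := by
        rw [hc]
        calc (δ : Zm0) * ((Multiplicative.ofAdd (-1 : ℤ) : Multiplicative ℤ) : Zm0)
            < (δ : Zm0) * 1 := by
              apply mul_lt_mul_of_pos_left _ (zero_lt_iff.mpr δ.ne_zero)
              exact WithZero.coe_lt_coe.mpr (by exact Multiplicative.ofAdd_lt.mpr (by norm_num))
          _ = (δ : Zm0) := mul_one _
      have hc0 : c ≠ 0 := by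
        intro h; rw [h, map_zero] at hc
        exact (mul_ne_zero δ.ne_zero (WithZero.coe_ne_zero)) hc.symm
      set A : Matrix (Fin 2) (Fin 2) K := !![1, t; 0, c] with hA
      set B : Matrix (Fin 2) (Fin 2) K := !![1, -t/c; 0, c⁻¹] with hB
      have hAB : A * B = 1 := by
        ext i j; fin_cases i <;> fin_cases j <;>
          (simp [hA, hB, Matrix.mul_apply, Fin.sum_univ_two]; try field_simp; try ring)
      have hBA : B * A = 1 := by
        ext i j; fin_cases i <;> fin_cases j <;>
          (simp [hA, hB, Matrix.mul_apply, Fin.sum_univ_two]; try field_simp; try ring)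
      set γ : Matrix.GeneralLinearGroup (Fin 2) K := ⟨A, B, hAB, hBA⟩ with hγ
      have hγinv : ((γ⁻¹ : Matrix.GeneralLinearGroup (Fin 2) K) :
          Matrix (Fin 2) (Fin 2) K) = B := rfl
      refine ⟨Uset K γ, ⟨γ, rfl⟩, ?_, ?_⟩
      · rw [hrel, mem_Uset_iff, hγinv]
        have hcomp : Matrix.vecMul vw.1 B = ![1, 0] := by
          funext j; fin_cases j <;>
            (simp [hvw, hB, Matrix.vecMul, dotProduct, Fin.sum_univ_two]; try field_simp; try ring)
        rw [hcomp]
        exact ⟨by simp, by simp⟩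
      · rintro y ⟨w, rfl, hint⟩
        rw [hγinv] at hint
        have hw0 : w.1 0 ≠ 0 := by
          have h1 := hint.1
          simpa [hB, Matrix.vecMul, dotProduct, Fin.sum_univ_two] using h1
        set s : K := w.1 1 / w.1 0 with hs
        have hne2 : (![1, s] : Fin 2 → K) ≠ 0 := by
          intro h; have := congrFun h 0; simp at this
        set w2 : PNZ K := ⟨![1, s], hne2⟩ with hw2
        have hsm : w2.1 = (w.1 0)⁻¹ • w.1 := by
          funext i; fin_cases i <;>
            simp [hw2, hs, div_eq_inv_mul, inv_mul_cancel₀ hw0]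
        have hrelw : (Quot.mk _ w : P1 K) = Quot.mk _ w2 :=
          Quot.sound ⟨(w.1 0)⁻¹, inv_ne_zero hw0, hsm⟩
        have hint2 : IsIntegralVec K (Matrix.vecMul w2.1 B) := by
          rw [hsm, Matrix.smul_vecMul]
          exact (integral_smul K (inv_ne_zero hw0) _).mpr hint
        have hcomp : Matrix.vecMul w2.1 B = ![1, (s - t) / c] := by
          funext j; fin_cases j <;>
            simp [hw2, hB, Matrix.vecMul, dotProduct, Fin.sum_univ_two]
          field_simp; ring
        rw [hcomp] at hint2
        have hst : Valued.v (s - t) ≤ Valued.v c := by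
          have h2 := hint2.2
          simp only [Matrix.cons_val_one, Matrix.head_cons, Matrix.cons_val_zero, map_one,
            map_div₀] at h2
          have hvcpos : (0 : Zm0) < Valued.v c := by
            rw [zero_lt_iff]; simpa using hc0
          exact (div_le_one₀ hvcpos).mp h2
        have hmemW : w2.1 ∈ W := by
          apply hsub
          intro i _
          fin_cases i
          · apply hγ0
            show Valued.v (w2.1 0 - vw.1 0) < (γ0 : Zm0)
            have : w2.1 0 - vw.1 0 = 0 := by simp [hw2, hvw]
            rw [this, map_zero]
            exact zero_lt_iff.mpr γ0.ne_zero
          · apply hγ1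
            show Valued.v (w2.1 1 - vw.1 1) < (γ1 : Zm0)
            have h3 : w2.1 1 - vw.1 1 = s - t := by simp [hw2, hvw]
            rw [h3]
            refine lt_of_le_of_lt hst (lt_of_lt_of_le hvc_lt ?_)
            exact_mod_cast Units.val_le_val.mpr (min_le_right γ0 γ1)
        rw [hrelw]
        have h4 : w2 ∈ Quot.mk _ ⁻¹' u := by rw [← hWeq]; exact hmemW
        exact h4


end BT3
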